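/- Let x < a and b < 0. Then ∫_0^∞ t · (a−x)·t^{−3/2}·φ((a + bt − x)/√t) dt = (a−x)/|b|; that is, the first-passage time of Brownian motion started at x through the line a + bt has finite expectation E(τ₁) = |a−x|/|b|. -/

import Mathlib

open MeasureTheory

/-- The standard normal density `φ`. -/
noncomputable def stdPhi (z : ℝ) : ℝ := Real.exp (-z ^ 2 / 2) / Real.sqrt (2 * Real.pi)

lemma stdPhi_pos (z : ℝ) : 0 < stdPhi z := by
  unfold stdPhi
  positivity

lemma continuous_stdPhi : Continuous stdPhi := by
  unfold stdPhi
  fun_prop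

lemma integrable_stdPhi : Integrable stdPhi := by
  have : stdPhi = fun z => (Real.sqrt (2 * Real.pi))⁻¹ * Real.exp (-(1/2) * z ^ 2) := by
    funext z; unfold stdPhi; ring_nf
  rw [this]
  exact (integrable_exp_neg_mul_sq (by norm_num : (0:ℝ) < 1/2)).const_mul _

lemma integral_stdPhi : ∫ z, stdPhi z = 1 := by
  have h : ∫ z : ℝ, Real.exp (-(1/2) * z ^ 2) = Real.sqrt (Real.pi / (1/2)) :=
    integral_gaussian (1/2)
  have h2 : stdPhi = fun z => (Real.sqrt (2 * Real.pi))⁻¹ * Real.exp (-(1/2) * z ^ 2) := by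
    funext z; unfold stdPhi; ring_nf
  rw [h2, integral_const_mul, h]
  rw [div_div_eq_mul_div, div_one, mul_comm (Real.pi) 2]
  rw [inv_mul_cancel₀]
  positivity

lemma stdPhi_neg (z : ℝ) : stdPhi (-z) = stdPhi z := by
  unfold stdPhi; rw [neg_pow]; norm_num

lemma integral_Iic_stdPhi : ∫ z in Set.Iic (0:ℝ), stdPhi z = 1/2 := by
  have hs : ∫ z in Set.Iic (0:ℝ), stdPhi z = ∫ z in Set.Ioi (0:ℝ), stdPhi z := by
    have h := integral_comp_neg_Iic (0:ℝ) stdPhi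
    simp only [stdPhi_neg, neg_zero] at h
    exact h
  have hadd : (∫ z in Set.Iic (0:ℝ), stdPhi z) + ∫ z in Set.Ioi (0:ℝ), stdPhi z = 1 := by
    rw [intervalIntegral.integral_Iic_add_Ioi integrable_stdPhi.integrableOn integrable_stdPhi.integrableOn]
    exact integral_stdPhi
  linarith [hs ▸ hadd]

lemma integral_Ioi_stdPhi : ∫ z in Set.Ioi (0:ℝ), stdPhi z = 1/2 := by
  have hadd : (∫ z in Set.Iic (0:ℝ), stdPhi z) + ∫ z in Set.Ioi (0:ℝ), stdPhi z = 1 := by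
    rw [intervalIntegral.integral_Iic_add_Ioi integrable_stdPhi.integrableOn integrable_stdPhi.integrableOn]
    exact integral_stdPhi
  rw [integral_Iic_stdPhi] at hadd; linarith

/-- Standard normal CDF. -/
noncomputable def PhiCDF (z : ℝ) : ℝ := 1/2 + ∫ t in (0:ℝ)..z, stdPhi t

lemma hasDerivAt_PhiCDF (z : ℝ) : HasDerivAt PhiCDF (stdPhi z) z := by
  have := (intervalIntegral.integral_hasDerivAt_right
    (f := stdPhi) (a := 0) (b := z)
    (continuous_stdPhi.intervalIntegrable 0 z)
    (continuous_stdPhi.stronglyMeasurableAtFilter _ _)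
    continuous_stdPhi.continuousAt)
  exact this.const_add (1/2)

lemma tendsto_PhiCDF_atTop : Filter.Tendsto PhiCDF Filter.atTop (nhds 1) := by
  have := intervalIntegral_tendsto_integral_Ioi 0
    (integrable_stdPhi.integrableOn (s := Set.Ioi 0)) Filter.tendsto_id
  rw [integral_Ioi_stdPhi] at this
  have := this.const_add (1/2)
  norm_num at this
  exact this

lemma tendsto_PhiCDF_atBot : Filter.Tendsto PhiCDF Filter.atBot (nhds 0) := by
  have := intervalIntegral_tendsto_integral_Iic 0
    (integrable_stdPhi.integrableOn (s := Set.Iic 0)) Filter.tendsto_id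
  rw [integral_Iic_stdPhi] at this
  have h2 : Filter.Tendsto (fun z => 1/2 + ∫ t in (0:ℝ)..z, stdPhi t) Filter.atBot (nhds 0) := by
    have h3 : ∀ z : ℝ, 1/2 + ∫ t in (0:ℝ)..z, stdPhi t = 1/2 - ∫ t in z..(0:ℝ), stdPhi t := by
      intro z; rw [intervalIntegral.integral_symm]; ring
    simp_rw [h3]
    have := (tendsto_const_nhds (x := (1:ℝ)/2) (f := Filter.atBot)).sub this
    norm_num at this; exact this
  exact h2

open Filter in
lemma tendsto_sqrt_atTop : Tendsto Real.sqrt atTop atTop := by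
  have h := tendsto_rpow_atTop (y := (1/2 : ℝ)) (by norm_num)
  refine h.congr' ?_
  filter_upwards [eventually_ge_atTop (0:ℝ)] with t ht
  exact (Real.sqrt_eq_rpow t).symm

open Filter Set in
/-- for `x < a` and `b < 0`, the first-passage time of Brownian motion
through the line `a + bt` has finite expectation `(a-x)/|b|`. -/
theorem stmt_10 (a x b : ℝ) (hx : x < a) (hb : b < 0) :
    (∫ t in Set.Ioi (0:ℝ),
        t * ((a - x) * t ^ (-(3:ℝ) / 2) * stdPhi ((a + b * t - x) / Real.sqrt t))) =
      (a - x) / |b| := by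
  set c : ℝ := a - x with hc_def
  have hc : 0 < c := sub_pos.mpr hx
  have hbne : b ≠ 0 := ne_of_lt hb
  set K : ℝ := Real.exp (-(2 * b * c)) with hK_def
  set G : ℝ → ℝ := fun t =>
    if t ≤ 0 then c / b
    else (c / b) * (K * PhiCDF ((b * t - c) / Real.sqrt t)
      + PhiCDF ((c + b * t) / Real.sqrt t)) with hG_def
  set F : ℝ → ℝ := fun t =>
    t * (c * t ^ (-(3:ℝ) / 2) * stdPhi ((a + b * t - x) / Real.sqrt t)) with hF_def
  -- derivative
  have hderiv : ∀ t ∈ Set.Ioi (0:ℝ), HasDerivAt G (F t) t := by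
    intro t ht
    have ht : (0:ℝ) < t := ht
    have hs : 0 < Real.sqrt t := Real.sqrt_pos.mpr ht
    have hsne : Real.sqrt t ≠ 0 := ne_of_gt hs
    have hss : Real.sqrt t * Real.sqrt t = t := Real.mul_self_sqrt ht.le
    -- derivative of u = (b*t - c)/√t
    have hu : HasDerivAt (fun t => (b * t - c) / Real.sqrt t)
        ((b * t + c) / (2 * t * Real.sqrt t)) t := by
      have hnum : HasDerivAt (fun t : ℝ => b * t - c) b t := by
        simpa using ((hasDerivAt_id t).const_mul b).sub_const c
      have h := hnum.div (Real.hasDerivAt_sqrt (ne_of_gt ht)) hsne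
      refine h.congr_deriv ?_
      symm
      rw [Real.sq_sqrt ht.le]
      field_simp
      linear_combination (-(2*b)) * hss
    have hv : HasDerivAt (fun t => (c + b * t) / Real.sqrt t)
        ((b * t - c) / (2 * t * Real.sqrt t)) t := by
      have hnum : HasDerivAt (fun t : ℝ => c + b * t) b t := by
        simpa using ((hasDerivAt_id t).const_mul b).const_add c
      have h := hnum.div (Real.hasDerivAt_sqrt (ne_of_gt ht)) hsne
      refine h.congr_deriv ?_
      symm
      rw [Real.sq_sqrt ht.le]
      field_simp
      linear_combination (-(2*b)) * hss
    have hPu := (hasDerivAt_PhiCDF ((b * t - c) / Real.sqrt t)).comp t hu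
    have hPv := (hasDerivAt_PhiCDF ((c + b * t) / Real.sqrt t)).comp t hv
    have hform : HasDerivAt (fun t => (c / b) * (K * PhiCDF ((b * t - c) / Real.sqrt t)
        + PhiCDF ((c + b * t) / Real.sqrt t)))
        ((c / b) * (K * (stdPhi ((b * t - c) / Real.sqrt t) * ((b * t + c) / (2 * t * Real.sqrt t)))
          + stdPhi ((c + b * t) / Real.sqrt t) * ((b * t - c) / (2 * t * Real.sqrt t)))) t :=
      ((hPu.const_mul K).add hPv).const_mul (c / b)
    -- key exponential identity
    have hkey : K * stdPhi ((b * t - c) / Real.sqrt t) = stdPhi ((c + b * t) / Real.sqrt t) := by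
      unfold stdPhi
      rw [hK_def, mul_div_assoc', ← Real.exp_add]
      congr 2
      field_simp
      nlinarith [hss]
    have hG_eq : G =ᶠ[nhds t] fun t => (c / b) * (K * PhiCDF ((b * t - c) / Real.sqrt t)
        + PhiCDF ((c + b * t) / Real.sqrt t)) := by
      filter_upwards [eventually_gt_nhds ht] with s hs0
      simp [hG_def, not_le.mpr hs0]
    have hrp : t ^ (-(3:ℝ)/2) = (t * Real.sqrt t)⁻¹ := by
      rw [show (-(3:ℝ)/2) = -((3:ℝ)/2) by ring, Real.rpow_neg ht.le]
      congr 1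
      rw [show ((3:ℝ)/2) = 1 + 1/2 by norm_num, Real.rpow_add ht, Real.rpow_one,
        ← Real.sqrt_eq_rpow]
    have hGd := hform.congr_of_eventuallyEq hG_eq
    refine hGd.congr_deriv ?_
    symm
    rw [hF_def]
    simp only
    rw [show a + b * t - x = c + b * t by rw [hc_def]; ring, hrp, ← mul_assoc K, hkey]
    field_simp
    ring
  -- nonnegativity of the integrand
  have hpos : ∀ t ∈ Set.Ioi (0:ℝ), 0 ≤ F t := by
    intro t ht
    have ht : (0:ℝ) < t := ht
    have h1 : (0:ℝ) ≤ t ^ (-(3:ℝ)/2) := Real.rpow_nonneg ht.le _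
    have h2 := (stdPhi_pos ((a + b * t - x) / Real.sqrt t)).le
    rw [hF_def]
    positivity
  -- limit at infinity
  have hsqrt_top : Tendsto Real.sqrt atTop atTop := tendsto_sqrt_atTop
  have hu_top : Tendsto (fun t => (b * t - c) / Real.sqrt t) atTop atBot := by
    have h1 : Tendsto (fun t : ℝ => b * Real.sqrt t) atTop atBot :=
      (hsqrt_top.const_mul_atTop_of_neg hb)
    have h2 : Tendsto (fun t : ℝ => -c * (Real.sqrt t)⁻¹) atTop (nhds 0) := by
      have := (hsqrt_top.inv_tendsto_atTop).const_mul (-c)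
      simpa using this
    have h3 := h2.add_atBot h1
    refine h3.congr' ?_
    filter_upwards [eventually_gt_atTop (0:ℝ)] with t ht
    have hsne : Real.sqrt t ≠ 0 := ne_of_gt (Real.sqrt_pos.mpr ht)
    have hss : Real.sqrt t * Real.sqrt t = t := Real.mul_self_sqrt ht.le
    field_simp
    linear_combination b * hss
  have hv_top : Tendsto (fun t => (c + b * t) / Real.sqrt t) atTop atBot := by
    have h1 : Tendsto (fun t : ℝ => b * Real.sqrt t) atTop atBot :=
      (hsqrt_top.const_mul_atTop_of_neg hb)
    have h2 : Tendsto (fun t : ℝ => c * (Real.sqrt t)⁻¹) atTop (nhds 0) := by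
      have := (hsqrt_top.inv_tendsto_atTop).const_mul c
      simpa using this
    have h3 := h2.add_atBot h1
    refine h3.congr' ?_
    filter_upwards [eventually_gt_atTop (0:ℝ)] with t ht
    have hsne : Real.sqrt t ≠ 0 := ne_of_gt (Real.sqrt_pos.mpr ht)
    have hss : Real.sqrt t * Real.sqrt t = t := Real.mul_self_sqrt ht.le
    field_simp
    linear_combination b * hss
  have htop : Tendsto G atTop (nhds 0) := by
    have h1 := tendsto_PhiCDF_atBot.comp hu_top
    have h2 := tendsto_PhiCDF_atBot.comp hv_top
    have h3 := ((h1.const_mul K).add h2).const_mul (c / b)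
    norm_num at h3
    refine h3.congr' ?_
    filter_upwards [eventually_gt_atTop (0:ℝ)] with t ht
    simp [hG_def, not_le.mpr ht, Function.comp, mul_add]
  -- continuity at 0 from the right
  have hsqrt0 : Tendsto Real.sqrt (nhdsWithin 0 (Set.Ioi 0)) (nhdsWithin 0 (Set.Ioi 0)) := by
    rw [tendsto_nhdsWithin_iff]
    constructor
    · exact (Real.continuous_sqrt.tendsto' 0 0 Real.sqrt_zero).mono_left nhdsWithin_le_nhds
    · filter_upwards [self_mem_nhdsWithin] with t ht
      exact Real.sqrt_pos.mpr ht
  have hinv0 : Tendsto (fun t : ℝ => (Real.sqrt t)⁻¹) (nhdsWithin 0 (Set.Ioi 0)) atTop :=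
    tendsto_inv_nhdsGT_zero.comp hsqrt0
  have hv0 : Tendsto (fun t => (c + b * t) / Real.sqrt t) (nhdsWithin 0 (Set.Ioi 0)) atTop := by
    have hnum : Tendsto (fun t : ℝ => c + b * t) (nhdsWithin 0 (Set.Ioi 0)) (nhds c) := by
      have : Continuous (fun t : ℝ => c + b * t) := by fun_prop
      have h := this.continuousAt (x := (0:ℝ))
      simp only [ContinuousAt, mul_zero, add_zero] at h
      exact h.mono_left nhdsWithin_le_nhds
    exact hnum.pos_mul_atTop hc hinv0
  have hu0 : Tendsto (fun t => (b * t - c) / Real.sqrt t) (nhdsWithin 0 (Set.Ioi 0)) atBot := by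
    have hnum : Tendsto (fun t : ℝ => b * t - c) (nhdsWithin 0 (Set.Ioi 0)) (nhds (-c)) := by
      have : Continuous (fun t : ℝ => b * t - c) := by fun_prop
      have h := this.continuousAt (x := (0:ℝ))
      simp only [ContinuousAt, mul_zero, zero_sub] at h
      exact h.mono_left nhdsWithin_le_nhds
    exact hnum.neg_mul_atTop (neg_lt_zero.mpr hc) hinv0
  have hcont : ContinuousWithinAt G (Set.Ici 0) 0 := by
    have hG0 : G 0 = c / b := by simp [hG_def]
    unfold ContinuousWithinAt
    rw [hG0, show Set.Ici (0:ℝ) = {0} ∪ Set.Ioi 0 by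
      rw [Set.union_comm, Set.Ioi_union_left], nhdsWithin_union]
    rw [tendsto_sup]
    constructor
    · rw [nhdsWithin_singleton]
      have : G 0 = c / b := hG0
      simpa [this] using tendsto_pure_nhds G 0
    · have h1 := tendsto_PhiCDF_atBot.comp hu0
      have h2 := tendsto_PhiCDF_atTop.comp hv0
      have h3 := ((h1.const_mul K).add h2).const_mul (c / b)
      norm_num at h3
      refine h3.congr' ?_
      filter_upwards [self_mem_nhdsWithin] with t ht
      simp [hG_def, not_le.mpr (show (0:ℝ) < t from ht), Function.comp, mul_add]
  -- assemble
  have hmain := integral_Ioi_of_hasDerivAt_of_nonneg hcont hderiv hpos htop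
  have hG0 : G 0 = c / b := by simp [hG_def]
  rw [hG0] at hmain
  calc (∫ t in Set.Ioi (0:ℝ), F t) = 0 - c / b := hmain
    _ = c / |b| := by
        rw [abs_of_neg hb, div_neg]
        ring
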